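/- Let T, m, y, L > 0 be real numbers. Define, for x > m²/L, A(x) := arcosh((L·x + m²)/(L·x − m²)) and h(x) := −T·A(x) − √(L·x·y), and set x₀ := 2·T·m/(L·√y) + m²/L. Then h(x₀) = −T·arcosh(1 + m·√y/T) − √(2·T·m·√y + y·m²), and the second derivative of h at x₀ equals h''(x₀) = −y·L^{3/2}/(4·T·m·√(x₀)). -/

import Mathlib

noncomputable def arcosh (x : ℝ) : ℝ := Real.log (x + Real.sqrt (x ^ 2 - 1))

lemma arcosh_helper (s m : ℝ) (hm : 0 < m) (hms : m < s) :
    arcosh ((s^2 + m^2) / (s^2 - m^2)) = Real.log (s + m) - Real.log (s - m) := by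
  have h0 : 0 < s := hm.trans hms
  have h1 : 0 < s^2 - m^2 := by nlinarith
  have h2 : ((s^2+m^2)/(s^2-m^2))^2 - 1 = (2*s*m/(s^2-m^2))^2 := by
    field_simp; ring
  have h3 : Real.sqrt (((s^2+m^2)/(s^2-m^2))^2 - 1) = 2*s*m/(s^2-m^2) := by
    rw [h2, Real.sqrt_sq (by positivity)]
  unfold arcosh
  rw [h3]
  have h4 : (s^2+m^2)/(s^2-m^2) + 2*s*m/(s^2-m^2) = (s+m)/(s-m) := by
    rw [← add_div, show s^2-m^2 = (s+m)*(s-m) by ring,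
      show s^2+m^2+2*s*m = (s+m)*(s+m) by ring,
      mul_div_mul_left _ _ (by positivity : (0:ℝ) < s+m).ne']
  rw [h4, Real.log_div (by positivity) (by simp [sub_ne_zero]; exact hms.ne')]


noncomputable def gfun (T m L s : ℝ) : ℝ → ℝ := fun x =>
  -(T * (Real.log (Real.sqrt (L * x) + m) - Real.log (Real.sqrt (L * x) - m))) -
    Real.sqrt (L * x) * s

noncomputable def Gfun (T m L s : ℝ) : ℝ → ℝ := fun x =>
  T * L * m / (Real.sqrt (L * x) * (L * x - m ^ 2)) - s * L / (2 * Real.sqrt (L * x))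

lemma gfun_hasDerivAt (T m L s x : ℝ) (hm : 0 < m) (hL : 0 < L) (hx : m ^ 2 < L * x) :
    HasDerivAt (gfun T m L s) (Gfun T m L s x) x := by
  have hLx : 0 < L * x := lt_trans (by positivity) hx
  have hr2 : (Real.sqrt (L * x)) ^ 2 = L * x := Real.sq_sqrt hLx.le
  have hrpos : 0 < Real.sqrt (L * x) := Real.sqrt_pos.mpr hLx
  have hrm : m < Real.sqrt (L * x) := by nlinarith [Real.sqrt_nonneg (L * x)]
  have hlin : HasDerivAt (fun x : ℝ => L * x) L x := by
    simpa using (hasDerivAt_id x).const_mul L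
  have hsq : HasDerivAt (fun x => Real.sqrt (L * x)) (L / (2 * Real.sqrt (L * x))) x :=
    hlin.sqrt hLx.ne'
  have d1 : HasDerivAt (fun x => Real.log (Real.sqrt (L * x) + m))
      ((L / (2 * Real.sqrt (L * x))) / (Real.sqrt (L * x) + m)) x :=
    (hsq.add_const m).log (by positivity)
  have d2 : HasDerivAt (fun x => Real.log (Real.sqrt (L * x) - m))
      ((L / (2 * Real.sqrt (L * x))) / (Real.sqrt (L * x) - m)) x :=
    (hsq.sub_const m).log (sub_ne_zero.mpr hrm.ne')
  have d3 : HasDerivAt (fun x => Real.sqrt (L * x) * s)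
      ((L / (2 * Real.sqrt (L * x))) * s) x := hsq.mul_const s
  have dD := (((d1.sub d2).const_mul T).neg).sub d3
  have hval : Gfun T m L s x =
      -(T * (L / (2 * Real.sqrt (L * x)) / (Real.sqrt (L * x) + m) -
        L / (2 * Real.sqrt (L * x)) / (Real.sqrt (L * x) - m))) -
        L / (2 * Real.sqrt (L * x)) * s := by
    simp only [Gfun]
    generalize hA : Real.sqrt (L * x) = a at hr2 hrpos hrm ⊢
    rw [show L * x - m ^ 2 = (a + m) * (a - m) by linear_combination -hr2]
    have hne1 : a + m ≠ 0 := by positivity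
    have hne2 : a - m ≠ 0 := sub_ne_zero.mpr hrm.ne'
    field_simp
    ring
  rw [hval]
  exact dD

theorem stmt_14 (T m y L : ℝ) (hT : 0 < T) (hm : 0 < m) (hy : 0 < y) (hL : 0 < L) :
    (fun x : ℝ => -T * arcosh ((L * x + m ^ 2) / (L * x - m ^ 2)) -
        Real.sqrt (L * x * y)) (2 * T * m / (L * Real.sqrt y) + m ^ 2 / L) =
      -T * arcosh (1 + m * Real.sqrt y / T) -
        Real.sqrt (2 * T * m * Real.sqrt y + y * m ^ 2) ∧
    deriv (deriv (fun x : ℝ => -T * arcosh ((L * x + m ^ 2) / (L * x - m ^ 2)) -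
        Real.sqrt (L * x * y))) (2 * T * m / (L * Real.sqrt y) + m ^ 2 / L) =
      -y * L ^ ((3 : ℝ) / 2) /
        (4 * T * m * Real.sqrt (2 * T * m / (L * Real.sqrt y) + m ^ 2 / L)) := by
  set s := Real.sqrt y with hs_def
  have hs : 0 < s := Real.sqrt_pos.mpr hy
  have hss : s * s = y := Real.mul_self_sqrt hy.le
  set x₀ : ℝ := 2 * T * m / (L * s) + m ^ 2 / L with hx0_def
  have hLx0 : L * x₀ = 2 * T * m / s + m ^ 2 := by
    rw [hx0_def]; field_simp
  have hLx0m : L * x₀ - m ^ 2 = 2 * T * m / s := by rw [hLx0]; ring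
  have hLx0pos : 0 < L * x₀ := by rw [hLx0]; positivity
  clear_value s x₀
  constructor
  · simp only
    have harg : (L * x₀ + m ^ 2) / (L * x₀ - m ^ 2) = 1 + m * s / T := by
      rw [hLx0m, hLx0]; field_simp; ring
    have hval : L * x₀ * y = 2 * T * m * s + y * m ^ 2 := by
      rw [hLx0]; field_simp
      linear_combination (-2*T) * hss
    rw [harg, hval]
  · -- second derivative
    have hx0U : x₀ ∈ Set.Ioi (m ^ 2 / L) := by
      simp only [Set.mem_Ioi, hx0_def]
      have h1 : 0 < 2 * T * m / (L * s) := by positivity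
      linarith
    have hUopen : IsOpen (Set.Ioi (m ^ 2 / L)) := isOpen_Ioi
    have hxU : ∀ x ∈ Set.Ioi (m ^ 2 / L), m ^ 2 < L * x := by
      intro x hx
      have h1 : m ^ 2 / L < x := hx
      have := mul_lt_mul_of_pos_left h1 hL
      rwa [mul_div_cancel₀ _ hL.ne'] at this
    have hfg : Set.EqOn (fun x : ℝ => -T * arcosh ((L * x + m ^ 2) / (L * x - m ^ 2)) -
        Real.sqrt (L * x * y)) (gfun T m L s) (Set.Ioi (m ^ 2 / L)) := by
      intro x hx
      have h2 : m ^ 2 < L * x := hxU x hx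
      have hLx : 0 < L * x := lt_trans (by positivity) h2
      have hr2 : (Real.sqrt (L * x)) ^ 2 = L * x := Real.sq_sqrt hLx.le
      have hrm : m < Real.sqrt (L * x) := by
        nlinarith [Real.sqrt_nonneg (L * x)]
      simp only [gfun]
      rw [show L * x + m ^ 2 = (Real.sqrt (L * x)) ^ 2 + m ^ 2 by rw [hr2],
          show L * x - m ^ 2 = (Real.sqrt (L * x)) ^ 2 - m ^ 2 by rw [hr2],
          arcosh_helper _ _ hm hrm, Real.sqrt_mul hLx.le, hs_def]
      ring
    have hfg_ev : (fun x : ℝ => -T * arcosh ((L * x + m ^ 2) / (L * x - m ^ 2)) -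
        Real.sqrt (L * x * y)) =ᶠ[nhds x₀] gfun T m L s :=
      Filter.eventuallyEq_of_mem (hUopen.mem_nhds hx0U) hfg
    have hderiv_ev : deriv (fun x : ℝ => -T * arcosh ((L * x + m ^ 2) / (L * x - m ^ 2)) -
        Real.sqrt (L * x * y)) =ᶠ[nhds x₀] Gfun T m L s := by
      filter_upwards [hfg_ev.deriv, hUopen.mem_nhds hx0U] with x h1 h2
      rw [h1, (gfun_hasDerivAt T m L s x hm hL (hxU x h2)).deriv]
    rw [hderiv_ev.deriv_eq]
    -- compute deriv (Gfun T m L s) x₀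
    have hr0pos : 0 < Real.sqrt (L * x₀) := Real.sqrt_pos.mpr hLx0pos
    have hLxm0pos : 0 < L * x₀ - m ^ 2 := by rw [hLx0m]; positivity
    have hden1ne : Real.sqrt (L * x₀) * (L * x₀ - m ^ 2) ≠ 0 := by positivity
    have hden2ne : 2 * Real.sqrt (L * x₀) ≠ 0 := by positivity
    have hlin0 : HasDerivAt (fun x : ℝ => L * x) L x₀ := by
      simpa using (hasDerivAt_id x₀).const_mul L
    have hsq0 : HasDerivAt (fun x => Real.sqrt (L * x)) (L / (2 * Real.sqrt (L * x₀))) x₀ :=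
      hlin0.sqrt hLx0pos.ne'
    have hden1 : HasDerivAt (fun x => Real.sqrt (L * x) * (L * x - m ^ 2))
        (L / (2 * Real.sqrt (L * x₀)) * (L * x₀ - m ^ 2) + Real.sqrt (L * x₀) * L) x₀ :=
      hsq0.mul (hlin0.sub_const (m ^ 2))
    have ht1 := (hasDerivAt_const x₀ (T * L * m)).div hden1 hden1ne
    have ht2 := (hasDerivAt_const x₀ (s * L)).div (hsq0.const_mul 2) hden2ne
    have hGD : HasDerivAt (Gfun T m L s)
        ((0 * (Real.sqrt (L * x₀) * (L * x₀ - m ^ 2)) -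
            T * L * m * (L / (2 * Real.sqrt (L * x₀)) * (L * x₀ - m ^ 2) + Real.sqrt (L * x₀) * L)) /
            (Real.sqrt (L * x₀) * (L * x₀ - m ^ 2)) ^ 2 -
          (0 * (2 * Real.sqrt (L * x₀)) - s * L * (2 * (L / (2 * Real.sqrt (L * x₀))))) /
            (2 * Real.sqrt (L * x₀)) ^ 2) x₀ := by
      exact ht1.sub ht2
    rw [hGD.deriv]
    -- final algebra
    have hx0pos : 0 < x₀ := lt_trans (by positivity) hx0U
    have hq : Real.sqrt x₀ * Real.sqrt x₀ = x₀ := Real.mul_self_sqrt hx0pos.le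
    have hu : Real.sqrt L * Real.sqrt L = L := Real.mul_self_sqrt hL.le
    have hr0uq : Real.sqrt (L * x₀) = Real.sqrt L * Real.sqrt x₀ := Real.sqrt_mul hL.le x₀
    have hL32 : L ^ ((3:ℝ)/2) = L * Real.sqrt L := by
      rw [show (3:ℝ)/2 = 1 + 1/2 by norm_num, Real.rpow_add hL, Real.rpow_one,
        ← Real.sqrt_eq_rpow]
    have hqpos : 0 < Real.sqrt x₀ := Real.sqrt_pos.mpr hx0pos
    have hupos : 0 < Real.sqrt L := Real.sqrt_pos.mpr hL
    rw [hLx0m, hr0uq, hL32, ← hu, ← hss]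
    field_simp
    rw [Real.sqrt_sq hupos.le]
    ring
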